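/- arXiv:2203.08045 — 3 statements merged into one kernel-verified Lean document; each statement's English description precedes it below -/
import Mathlib

section
/- The boundary varifold Γ in the definition of orthogonal boundary is unique: if V is orthogonal to S along both Γ₁ and Γ₂, then Γ₁ = Γ₂. -/
open MeasureTheory RealInnerProductSpace
open scoped ENNReal
open Manifold Set Topology
set_option synthInstance.maxHeartbeats 1000000
set_option maxHeartbeats 1000000

noncomputable section

/-- Euclidean `n`-space. -/
abbrev E (n : ℕ) := EuclideanSpace ℝ (Fin n)

/-- Continuous linear endomorphisms of `ℝⁿ` (`n×n` matrices); `G(m,n)` is viewed as the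
subset of orthogonal projections of rank `m`. -/
abbrev CLM (n : ℕ) := E n →L[ℝ] E n

/-- The standard orthonormal basis of `ℝⁿ`. -/
def eb (n : ℕ) : OrthonormalBasis (Fin n) ℝ (E n) := EuclideanSpace.basisFun (Fin n) ℝ

/-- `P` is an orthogonal projection. -/
def IsOrthoProj {n : ℕ} (P : CLM n) : Prop :=
  P.comp P = P ∧ ∀ v w, ⟪P v, w⟫ = ⟪v, P w⟫

/-- The projection onto `ν ∧ Q`, the span of the unit vector `ν` and the plane `Q ⊥ ν`. -/
def wedge {n : ℕ} (ν : E n) (Q : CLM n) : CLM n :=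
  Q + (innerSL ℝ ν).smulRight ν

/-- Definition (orthogonal boundary): the `m`-varifold `V` (a measure on `ℝⁿ × G(m,n)`),
with curvature `B`, is orthogonal to `S = ∂Ω` (with interior unit normal `ν`) along the
`(m−1)`-varifold `Γ`: for all `φ ∈ C¹(ℝⁿ × ℝ^{n×n}, ℝⁿ)`,
`∫ (D_Pφ·B + ⟨tr B, φ⟩ + ⟨D_xφ, P⟩) dV = −∫ ⟨ν(x), φ(x, ν(x)∧Q)⟩ dΓ(x,Q)`. -/
def VarOrth (n : ℕ) (V Γ : Measure (E n × CLM n))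
    (B : E n × CLM n → (E n →L[ℝ] E n →L[ℝ] E n)) (ν : E n → E n) : Prop :=
  ∀ φ : E n × CLM n → E n, ContDiff ℝ 1 φ →
    ∫ p, ((∑ i, ⟪fderiv ℝ φ p ((0 : E n), B p (eb n i)), eb n i⟫)
        + ⟪∑ i, B p (eb n i) (eb n i), φ p⟫
        + ∑ i, ⟪fderiv ℝ φ p (p.2 (eb n i), (0 : CLM n)), eb n i⟫) ∂V
    = - ∫ q, ⟪ν q.1, φ (q.1, wedge (ν q.1) q.2)⟫ ∂Γ


/-- The boundary varifold `Γ` in the definition of orthogonal boundary is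
unique: if `V` (supported in `Ω̄`, with curvature `B ∈ L¹(V)`) is orthogonal to `S = ∂Ω`
along both `Γ₁` and `Γ₂` (both supported in the bundle `G_{m−1}(TS)`), then `Γ₁ = Γ₂`. -/
theorem stmt4 (n m : ℕ) (Ω : Set (E n)) (hΩo : IsOpen Ω) (hΩb : Bornology.IsBounded Ω)
    (ν : E n → E n) (hν : ContDiff ℝ 1 ν) (hνunit : ∀ x ∈ frontier Ω, ‖ν x‖ = 1)
    (V : Measure (E n × CLM n)) [IsFiniteMeasure V]
    (B : E n × CLM n → (E n →L[ℝ] E n →L[ℝ] E n))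
    (hBint : Integrable (fun p => ‖B p‖) V)
    (hVsupp : ∀ᵐ p ∂V, p.1 ∈ closure Ω ∧ IsOrthoProj p.2 ∧
        ∑ i, ⟪p.2 (eb n i), eb n i⟫ = (m : ℝ))
    (Γ₁ Γ₂ : Measure (E n × CLM n)) [IsFiniteMeasure Γ₁] [IsFiniteMeasure Γ₂]
    (hΓ₁supp : ∀ᵐ q ∂Γ₁, q.1 ∈ frontier Ω ∧ IsOrthoProj q.2 ∧ q.2 (ν q.1) = 0 ∧
        ∑ i, ⟪q.2 (eb n i), eb n i⟫ = (m : ℝ) - 1)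
    (hΓ₂supp : ∀ᵐ q ∂Γ₂, q.1 ∈ frontier Ω ∧ IsOrthoProj q.2 ∧ q.2 (ν q.1) = 0 ∧
        ∑ i, ⟪q.2 (eb n i), eb n i⟫ = (m : ℝ) - 1)
    (horth₁ : VarOrth n V Γ₁ B ν) (horth₂ : VarOrth n V Γ₂ B ν) :
    Γ₁ = Γ₂ := by
  -- Step 1: the two orthogonality identities force all integrals of `C¹` scalar test
  -- functions against `Γ₁` and `Γ₂` to agree.
  have key : ∀ h : E n × CLM n → ℝ, ContDiff ℝ 1 h →
      ∫ q, h q ∂Γ₁ = ∫ q, h q ∂Γ₂ := by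
    intro h hh
    set φ : E n × CLM n → E n := fun p =>
      h (p.1, p.2 - (innerSL ℝ (ν p.1)).smulRight (ν p.1)) • ν p.1 with hφdef
    have hφ : ContDiff ℝ 1 φ := by
      have hc : ContDiff ℝ 1 (fun v : E n => (innerSL ℝ v).smulRight v) := by
        have : ContDiff ℝ 1 (fun v : E n =>
            ((ContinuousLinearMap.smulRightL ℝ (E n) (E n)).comp
              (innerSL ℝ (E := E n)) v) v) :=
          (ContinuousLinearMap.contDiff _).clm_apply contDiff_id
        simpa using this
      have hν1 : ContDiff ℝ 1 (fun p : E n × CLM n => ν p.1) := hν.comp contDiff_fst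
      exact (hh.comp ((contDiff_fst).prodMk (contDiff_snd.sub (hc.comp hν1)))).smul hν1
    have hΓeq : ∫ q, ⟪ν q.1, φ (q.1, wedge (ν q.1) q.2)⟫ ∂Γ₁
        = ∫ q, ⟪ν q.1, φ (q.1, wedge (ν q.1) q.2)⟫ ∂Γ₂ :=
      neg_injective ((horth₁ φ hφ).symm.trans (horth₂ φ hφ))
    have hcompute : ∀ (q : E n × CLM n), q.1 ∈ frontier Ω →
        ⟪ν q.1, φ (q.1, wedge (ν q.1) q.2)⟫ = h q := by
      intro q hq
      have : φ (q.1, wedge (ν q.1) q.2) = h q • ν q.1 := by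
        simp only [hφdef, wedge, add_sub_cancel_right]
      rw [this, real_inner_smul_right, real_inner_self_eq_norm_sq, hνunit _ hq]
      ring
    have h1 : ∫ q, ⟪ν q.1, φ (q.1, wedge (ν q.1) q.2)⟫ ∂Γ₁ = ∫ q, h q ∂Γ₁ := by
      refine integral_congr_ae ?_
      filter_upwards [hΓ₁supp] with q hq
      exact hcompute q hq.1
    have h2 : ∫ q, ⟪ν q.1, φ (q.1, wedge (ν q.1) q.2)⟫ ∂Γ₂ = ∫ q, h q ∂Γ₂ := by
      refine integral_congr_ae ?_
      filter_upwards [hΓ₂supp] with q hq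
      exact hcompute q hq.1
    rw [← h1, ← h2, hΓeq]
  -- Step 2: integrals of `C¹` functions determine a finite Borel measure.
  have key2 : ∀ F : Set (E n × CLM n), IsClosed F → Γ₁ F = Γ₂ F := by
    intro F hF
    rcases F.eq_empty_or_nonempty with rfl | hFne
    · simp
    -- smooth approximations of the indicator of `F`
    have hex : ∀ k : ℕ, ∃ g : E n × CLM n → ℝ, ContDiff ℝ 1 g ∧
        (∀ x ∈ F, g x = 1) ∧
        (∀ x, 1/((k:ℝ)+1) ≤ Metric.infDist x F → g x = 0) ∧
        ∀ x, g x ∈ Set.Icc (0:ℝ) 1 := by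
      intro k
      have hδ : (0:ℝ) < 1/((k:ℝ)+1) := by positivity
      set t : Set (E n × CLM n) := {x | 1/((k:ℝ)+1) ≤ Metric.infDist x F} with ht_def
      have ht : IsClosed t :=
        isClosed_le continuous_const (Metric.continuous_infDist_pt F)
      have hd : Disjoint F t := by
        rw [Set.disjoint_left]
        intro x hxF hxt
        have := Metric.infDist_zero_of_mem hxF
        have h2 : 1/((k:ℝ)+1) ≤ Metric.infDist x F := hxt
        rw [this] at h2; linarith
      obtain ⟨f, h0, h1, hb⟩ :=
        exists_contMDiffMap_zero_one_of_isClosed (𝓘(ℝ, E n × CLM n)) (n := ⊤) hF ht hd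
      refine ⟨fun x => 1 - f x, (contDiff_const).sub
        ((contMDiff_iff_contDiff.mp f.contMDiff).of_le (mod_cast le_top)),
        fun x hx => by simp [h0 hx], fun x hx => by simp [h1 hx], fun x => ?_⟩
      have h := hb x
      simp only [Set.mem_Icc] at h ⊢
      exact ⟨by linarith [h.2], by linarith [h.1]⟩
    choose g hg1 hg2 hg3 hg4 using hex
    have hFm : MeasurableSet F := hF.measurableSet
    -- dominated convergence for each measure
    have hlim : ∀ (μ : Measure (E n × CLM n)), IsFiniteMeasure μ →
        Filter.Tendsto (fun k => ∫ q, g k q ∂μ) Filter.atTop (𝓝 ((μ F).toReal)) := by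
      intro μ hμfin
      have hind : ∫ q, F.indicator (fun _ => (1:ℝ)) q ∂μ = (μ F).toReal := by
        rw [integral_indicator_const (1:ℝ) hFm, smul_eq_mul, mul_one, measureReal_def]
      rw [← hind]
      refine tendsto_integral_of_dominated_convergence (fun _ => (1:ℝ))
        (fun k => ((hg1 k).continuous).aestronglyMeasurable) (integrable_const 1)
        (fun k => Filter.Eventually.of_forall fun x => ?_)
        (Filter.Eventually.of_forall fun x => ?_)
      · obtain ⟨ha, hb⟩ := hg4 k x
        show ‖g k x‖ ≤ 1
        rw [Real.norm_eq_abs, abs_le]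
        exact ⟨by linarith, hb⟩
      · by_cases hx : x ∈ F
        · have : ∀ k, g k x = 1 := fun k => hg2 k x hx
          simp only [this, Set.indicator_of_mem hx]
          exact tendsto_const_nhds
        · have hpos : 0 < Metric.infDist x F :=
            (hF.notMem_iff_infDist_pos hFne).mp hx
          have htend : Filter.Tendsto (fun k : ℕ => 1/((k:ℝ)+1)) Filter.atTop (𝓝 0) :=
            tendsto_one_div_add_atTop_nhds_zero_nat
          have hev : ∀ᶠ k in Filter.atTop, g k x = 0 := by
            filter_upwards [htend.eventually_lt_const hpos] with k hk
            exact hg3 k x hk.le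
          rw [Set.indicator_of_notMem hx]
          exact Filter.Tendsto.congr' (hev.mono fun k hk => hk.symm) tendsto_const_nhds
    have h1 := hlim Γ₁ inferInstance
    have h2 := hlim Γ₂ inferInstance
    have h12 : (fun k => ∫ q, g k q ∂Γ₁) = fun k => ∫ q, g k q ∂Γ₂ :=
      funext fun k => key (g k) (hg1 k)
    rw [h12] at h1
    have := tendsto_nhds_unique h1 h2
    exact (ENNReal.toReal_eq_toReal_iff' (measure_ne_top Γ₁ F) (measure_ne_top Γ₂ F)).mp this
  apply MeasureTheory.ext_of_generate_finite _ ?_ isPiSystem_isClosed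
  · exact fun F hF => key2 F hF
  · exact key2 _ isClosed_univ
  · rw [BorelSpace.measurable_eq (α := E n × CLM n), borel_eq_generateFrom_isClosed]
end
end

section
/- Let S = ∂Ω be a C² hypersurface with interior unit normal ν^S and σ the reflection across S defined on a tubular neighborhood by σ(x + r ν^S(x)) = x − r ν^S(x). Then for x ∈ S: Dσ(x)ν^S(x) = −ν^S(x) and Dσ(x)v = v for v ∈ T_xS; consequently the pullback metric g_{ij} = ⟨∂_iσ, ∂_jσ⟩ satisfies g_{ij}(x) = δ_{ij}, and its derivative is Dg_{ij}(x)v = 4⟨ν^S(x), v⟩·h^S(x)(P_S e_i, P_S e_j), where P_S is the orthogonal projection onto T_xS and h^S the second fundamental form of S. -/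
open RealInnerProductSpace

noncomputable section

/-- The adjoint, as a continuous `ℝ`-linear map on continuous linear maps. -/
def adjCLM (n : ℕ) :
    (EuclideanSpace ℝ (Fin n) →L[ℝ] EuclideanSpace ℝ (Fin n)) →L[ℝ]
      (EuclideanSpace ℝ (Fin n) →L[ℝ] EuclideanSpace ℝ (Fin n)) :=
  { toFun := fun T => ContinuousLinearMap.adjoint T
    map_add' := fun T U => by simp [map_add]
    map_smul' := fun c T => by simp
    cont := (ContinuousLinearMap.adjoint :
      (EuclideanSpace ℝ (Fin n) →L[ℝ] EuclideanSpace ℝ (Fin n)) ≃ₗᵢ⋆[ℝ]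
        (EuclideanSpace ℝ (Fin n) →L[ℝ] EuclideanSpace ℝ (Fin n))).continuous }

set_option maxHeartbeats 1000000 in
/-- Let `S = ∂Ω` be a `C²` hypersurface with interior unit normal `ν`
(extended to a `C¹` field) and `σ` the reflection across `S`, defined on a tubular
neighborhood by `σ(x + r ν(x)) = x − r ν(x)`. Then for `x ∈ S`:
`Dσ(x)ν(x) = −ν(x)` and `Dσ(x)v = v` for tangent vectors `v ∈ T_xS` (velocities of curves
in `S`); consequently the pullback metric `G(y) = Dσ(y)^T Dσ(y)` satisfies `G(x) = Id`,
and its derivative is `DG(x)v = 4⟨ν(x),v⟩·h^S(P_S·, P_S·)`, where `P_S` is the orthogonal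
projection onto `T_xS = ν(x)^⊥` and `h^S(a,b) = ⟨W a, b⟩` with Weingarten map
`W = −Dν(x)`. -/
theorem stmt10 (n : ℕ) (Ω : Set (EuclideanSpace ℝ (Fin n)))
    (S : Set (EuclideanSpace ℝ (Fin n))) (hS : S = frontier Ω)
    (ν : EuclideanSpace ℝ (Fin n) → EuclideanSpace ℝ (Fin n))
    (hν : ContDiff ℝ 1 ν) (hνunit : ∀ x ∈ S, ‖ν x‖ = 1)
    (σ : EuclideanSpace ℝ (Fin n) → EuclideanSpace ℝ (Fin n))
    (hσ : ContDiff ℝ 2 σ) (δ : ℝ) (hδ : 0 < δ)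
    (hrefl : ∀ x ∈ S, ∀ r ∈ Set.Ioo (-δ) δ, σ (x + r • ν x) = x - r • ν x)
    (x : EuclideanSpace ℝ (Fin n)) (hx : x ∈ S)
    (htube : {y | ∃ x' ∈ S, ∃ r ∈ Set.Ioo (-δ) δ, y = x' + r • ν x'} ∈ nhds x)
    (hcurves : ∀ x' ∈ S, ∀ v, ⟪v, ν x'⟫ = 0 →
      ∃ γ : ℝ → EuclideanSpace ℝ (Fin n),
        ContDiff ℝ 1 γ ∧ (∀ t, γ t ∈ S) ∧ γ 0 = x' ∧ deriv γ 0 = v) :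
    (fderiv ℝ σ x (ν x) = -ν x)
    ∧ (∀ v, ⟪v, ν x⟫ = 0 → fderiv ℝ σ x v = v)
    ∧ (∀ v w, ⟪fderiv ℝ σ x v, fderiv ℝ σ x w⟫ = ⟪v, w⟫)
    ∧ (∀ v w z,
        ⟪(fderiv ℝ
            (fun y => (ContinuousLinearMap.adjoint (fderiv ℝ σ y)).comp (fderiv ℝ σ y))
            x v) w, z⟫
          = 4 * ⟪ν x, v⟫ *
            ⟪-(fderiv ℝ ν x (w - ⟪w, ν x⟫ • ν x)), z - ⟪z, ν x⟫ • ν x⟫) := by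
  have hσ1 : ContDiff ℝ 1 σ := hσ.of_le (by norm_num)
  have hσd : Differentiable ℝ σ := hσ1.differentiable one_ne_zero
  have hνd : Differentiable ℝ ν := hν.differentiable one_ne_zero
  have hD : ContDiff ℝ 1 (fun y => fderiv ℝ σ y) := hσ.fderiv_right (by norm_num)
  have hDd : Differentiable ℝ (fun y => fderiv ℝ σ y) := hD.differentiable one_ne_zero
  have h0δ : (0:ℝ) ∈ Set.Ioo (-δ) δ := ⟨by linarith, hδ⟩
  have hν1 : ∀ x' ∈ S, ⟪ν x', ν x'⟫ = 1 := fun x' hx' => by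
    rw [real_inner_self_eq_norm_sq, hνunit x' hx']; norm_num
  -- derivative of σ in the normal direction, everywhere in the tube
  have L1 : ∀ x' ∈ S, ∀ r ∈ Set.Ioo (-δ) δ,
      fderiv ℝ σ (x' + r • ν x') (ν x') = -ν x' := by
    intro x' hx' r hr
    have hc : HasDerivAt (fun r : ℝ => x' + r • ν x') (ν x') r := by
      simpa using ((hasDerivAt_id r).smul_const (ν x')).const_add x'
    have h1 : HasDerivAt (fun r : ℝ => σ (x' + r • ν x'))
        (fderiv ℝ σ (x' + r • ν x') (ν x')) r :=
      (hσd _).hasFDerivAt.comp_hasDerivAt r hc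
    have h2 : HasDerivAt (fun r : ℝ => x' - r • ν x') (-ν x') r := by
      simpa using ((hasDerivAt_id r).smul_const (ν x')).const_sub x'
    have heq : (fun r : ℝ => σ (x' + r • ν x')) =ᶠ[nhds r]
        fun r : ℝ => x' - r • ν x' := by
      filter_upwards [isOpen_Ioo.mem_nhds hr] with s hs
      exact hrefl x' hx' s hs
    exact h1.unique (h2.congr_of_eventuallyEq heq)
  -- σ fixes tangent vectors at points of S
  have L2 : ∀ x' ∈ S, ∀ v, ⟪v, ν x'⟫ = 0 → fderiv ℝ σ x' v = v := by
    intro x' hx' v hv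
    obtain ⟨γ, hγ, hγS, hγ0, hγ'⟩ := hcurves x' hx' v hv
    have hγd : HasDerivAt γ v 0 := by
      have := (hγ.differentiable one_ne_zero 0).hasDerivAt
      rwa [hγ'] at this
    have h1 : HasDerivAt (fun t => σ (γ t)) (fderiv ℝ σ x' v) 0 := by
      have := (hσd (γ 0)).hasFDerivAt.comp_hasDerivAt 0 hγd
      rwa [hγ0] at this
    have h2 : (fun t => σ (γ t)) = γ := by
      funext t
      have := hrefl (γ t) (hγS t) 0 h0δ
      simpa using this
    rw [h2] at h1
    exact h1.unique hγd
  -- the derivative of ν along tangent directions is tangent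
  have L3 : ∀ x' ∈ S, ∀ v, ⟪v, ν x'⟫ = 0 → ⟪fderiv ℝ ν x' v, ν x'⟫ = 0 := by
    intro x' hx' v hv
    obtain ⟨γ, hγ, hγS, hγ0, hγ'⟩ := hcurves x' hx' v hv
    have hγd : HasDerivAt γ v 0 := by
      have := (hγ.differentiable one_ne_zero 0).hasDerivAt
      rwa [hγ'] at this
    have hνγ : HasDerivAt (fun t => ν (γ t)) (fderiv ℝ ν x' v) 0 := by
      have := (hνd (γ 0)).hasFDerivAt.comp_hasDerivAt 0 hγd
      rwa [hγ0] at this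
    have h1 : HasDerivAt (fun t => ⟪ν (γ t), ν (γ t)⟫)
        (⟪ν x', fderiv ℝ ν x' v⟫ + ⟪fderiv ℝ ν x' v, ν x'⟫) 0 := by
      have := HasDerivAt.inner ℝ hνγ hνγ
      rwa [hγ0] at this
    have h2 : (fun t => ⟪ν (γ t), ν (γ t)⟫) = fun _ : ℝ => (1:ℝ) :=
      funext fun t => hν1 _ (hγS t)
    rw [h2] at h1
    have h3 := h1.unique (hasDerivAt_const 0 (1:ℝ))
    rw [real_inner_comm ((fderiv ℝ ν x') v) (ν x')] at h3
    linarith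
  -- the key identity in the tube, differentiated tangentially
  have L4 : ∀ v, ⟪v, ν x⟫ = 0 → ∀ r ∈ Set.Ioo (-δ) δ,
      fderiv ℝ σ (x + r • ν x) (v + r • fderiv ℝ ν x v)
        = v - r • fderiv ℝ ν x v := by
    intro v hv r hr
    obtain ⟨γ, hγ, hγS, hγ0, hγ'⟩ := hcurves x hx v hv
    have hγd : HasDerivAt γ v 0 := by
      have := (hγ.differentiable one_ne_zero 0).hasDerivAt
      rwa [hγ'] at this
    have hνγ : HasDerivAt (fun t => ν (γ t)) (fderiv ℝ ν x v) 0 := by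
      have := (hνd (γ 0)).hasFDerivAt.comp_hasDerivAt 0 hγd
      rwa [hγ0] at this
    have hc : HasDerivAt (fun t => γ t + r • ν (γ t))
        (v + r • fderiv ℝ ν x v) 0 := hγd.add (hνγ.const_smul r)
    have h1 : HasDerivAt (fun t => σ (γ t + r • ν (γ t)))
        (fderiv ℝ σ (x + r • ν x) (v + r • fderiv ℝ ν x v)) 0 := by
      have := (hσd _).hasFDerivAt.comp_hasDerivAt 0 hc
      simpa [hγ0, Function.comp_def] using this
    have h2 : (fun t => σ (γ t + r • ν (γ t))) = fun t => γ t - r • ν (γ t) :=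
      funext fun t => hrefl (γ t) (hγS t) r hr
    rw [h2] at h1
    exact h1.unique (hγd.sub (hνγ.const_smul r))
  -- Part 1
  have hAν : fderiv ℝ σ x (ν x) = -ν x := by
    have := L1 x hx 0 h0δ
    simpa using this
  -- orthogonal decomposition facts
  have hPt : ∀ x' ∈ S, ∀ u, ⟪u - ⟪u, ν x'⟫ • ν x', ν x'⟫ = 0 := by
    intro x' hx' u
    rw [inner_sub_left, real_inner_smul_left, hν1 x' hx']; ring
  -- full formula for A := Dσ(x)
  have hA : ∀ u, fderiv ℝ σ x u = u - (2 * ⟪u, ν x⟫) • ν x := by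
    intro u
    have hdec : u = (u - ⟪u, ν x⟫ • ν x) + ⟪u, ν x⟫ • ν x := by abel
    calc fderiv ℝ σ x u
        = fderiv ℝ σ x ((u - ⟪u, ν x⟫ • ν x) + ⟪u, ν x⟫ • ν x) := by rw [← hdec]
      _ = fderiv ℝ σ x (u - ⟪u, ν x⟫ • ν x) + ⟪u, ν x⟫ • fderiv ℝ σ x (ν x) := by
          rw [map_add, map_smul]
      _ = (u - ⟪u, ν x⟫ • ν x) + ⟪u, ν x⟫ • (-ν x) := by
          rw [L2 x hx _ (hPt x hx u), hAν]
      _ = u - (2 * ⟪u, ν x⟫) • ν x := by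
          rw [smul_neg, two_mul, add_smul]; abel
  refine ⟨hAν, L2 x hx, ?_, ?_⟩
  · -- Part 3
    intro v w
    rw [hA v, hA w]
    simp only [inner_sub_left, inner_sub_right, real_inner_smul_left, real_inner_smul_right,
      hν1 x hx]
    rw [real_inner_comm (ν x) w]
    ring
  · -- Part 4
    intro v w z
    -- second derivative B
    set B := fderiv ℝ (fun y => fderiv ℝ σ y) x with hB
    have hDfd : HasFDerivAt (fun y => fderiv ℝ σ y) B x := (hDd x).hasFDerivAt
    have hBsym : ∀ a b, B a b = B b a :=
      second_derivative_symmetric (fun y => (hσd y).hasFDerivAt) hDfd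
    -- derivative of r ↦ Dσ(x + r ν x)
    have hcν : HasDerivAt (fun r : ℝ => x + r • ν x) (ν x) 0 := by
      simpa using ((hasDerivAt_id (0:ℝ)).smul_const (ν x)).const_add x
    have hΨ : HasDerivAt (fun r : ℝ => fderiv ℝ σ (x + r • ν x)) (B (ν x)) 0 := by
      have hD0 : HasFDerivAt (fun y => fderiv ℝ σ y) B (x + (0:ℝ) • ν x) := by
        simpa using hDfd
      exact hD0.comp_hasDerivAt 0 hcν
    -- B ν ν = 0
    have hBνν : B (ν x) (ν x) = 0 := by
      have h1 := hΨ.clm_apply (hasDerivAt_const (0:ℝ) (ν x))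
      have heq : (fun r : ℝ => fderiv ℝ σ (x + r • ν x) (ν x)) =ᶠ[nhds 0]
          fun _ => -ν x := by
        filter_upwards [isOpen_Ioo.mem_nhds h0δ] with s hs
        exact L1 x hx s hs
      have h2 : HasDerivAt (fun r : ℝ => fderiv ℝ σ (x + r • ν x) (ν x)) 0 0 :=
        (hasDerivAt_const (0:ℝ) (-ν x)).congr_of_eventuallyEq heq
      have h3 := h1.unique h2
      simpa using h3
    -- B ν v for tangent v
    have hBνt : ∀ v, ⟪v, ν x⟫ = 0 →
        B (ν x) v = -(fderiv ℝ ν x v) - fderiv ℝ ν x v := by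
      intro v hv
      set m := fderiv ℝ ν x v with hm
      have hu : HasDerivAt (fun r : ℝ => v + r • m) m 0 := by
        simpa using ((hasDerivAt_id (0:ℝ)).smul_const m).const_add v
      have h1 := hΨ.clm_apply hu
      have heq : (fun r : ℝ => fderiv ℝ σ (x + r • ν x) (v + r • m)) =ᶠ[nhds 0]
          fun r : ℝ => v - r • m := by
        filter_upwards [isOpen_Ioo.mem_nhds h0δ] with s hs
        exact L4 v hv s hs
      have h2 : HasDerivAt (fun r : ℝ => v - r • m) (-m) 0 := by
        simpa using ((hasDerivAt_id (0:ℝ)).smul_const m).const_sub v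
      have h3 := h1.unique (h2.congr_of_eventuallyEq heq)
      have hAm : fderiv ℝ σ x m = m := L2 x hx m (L3 x hx v hv)
      simp only [zero_smul, add_zero] at h3
      rw [hAm] at h3
      exact eq_sub_of_add_eq h3
    -- B v w for tangent v, w
    have hBtt : ∀ v w, ⟪v, ν x⟫ = 0 → ⟪w, ν x⟫ = 0 →
        B v w = -((2 * ⟪w, fderiv ℝ ν x v⟫) • ν x) := by
      intro v w hv hw
      obtain ⟨γ, hγ, hγS, hγ0, hγ'⟩ := hcurves x hx v hv
      have hγd : HasDerivAt γ v 0 := by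
        have := (hγ.differentiable one_ne_zero 0).hasDerivAt
        rwa [hγ'] at this
      have hνγ : HasDerivAt (fun t => ν (γ t)) (fderiv ℝ ν x v) 0 := by
        have := (hνd (γ 0)).hasFDerivAt.comp_hasDerivAt 0 hγd
        rwa [hγ0] at this
      have hΦ : HasDerivAt (fun t => fderiv ℝ σ (γ t)) (B v) 0 := by
        have hD0 : HasFDerivAt (fun y => fderiv ℝ σ y) B (γ 0) := by
          rw [hγ0]; exact hDfd
        exact hD0.comp_hasDerivAt 0 hγd
      have hs : HasDerivAt (fun t => ⟪w, ν (γ t)⟫) ⟪w, fderiv ℝ ν x v⟫ 0 := by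
        have := HasDerivAt.inner ℝ (hasDerivAt_const (0:ℝ) w) hνγ
        simpa [hγ0] using this
      have hu : HasDerivAt (fun t => w - ⟪w, ν (γ t)⟫ • ν (γ t))
          (-(⟪w, fderiv ℝ ν x v⟫ • ν x)) 0 := by
        have h := (hs.smul hνγ).const_sub w
        simpa [hγ0, hw] using h
      have h1 := hΦ.clm_apply hu
      have h2 : (fun t => fderiv ℝ σ (γ t) (w - ⟪w, ν (γ t)⟫ • ν (γ t)))
          = fun t => w - ⟪w, ν (γ t)⟫ • ν (γ t) :=
        funext fun t => L2 (γ t) (hγS t) _ (hPt (γ t) (hγS t) w)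
      rw [h2] at h1
      have h3 := h1.unique hu
      -- simplify h3
      rw [hγ0, hw] at h3
      simp only [zero_smul, sub_zero] at h3
      rw [map_neg, map_smul, hAν, smul_neg, neg_neg] at h3
      have := eq_sub_of_add_eq h3
      rw [this, two_mul, add_smul]; abel
    -- Weingarten symmetry
    have hW : ∀ a b, ⟪a, ν x⟫ = 0 → ⟪b, ν x⟫ = 0 →
        ⟪b, fderiv ℝ ν x a⟫ = ⟪a, fderiv ℝ ν x b⟫ := by
      intro a b ha hb
      have h1 := hBtt a b ha hb
      have h2 := hBtt b a hb ha
      have h3 := (hBsym a b).trans h2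
      rw [h1] at h3
      have h4 := congrArg (fun u => ⟪u, ν x⟫) h3
      simp only [inner_neg_left, real_inner_smul_left, hν1 x hx, mul_one] at h4
      linarith
    -- the product rule for G
    have hadj : HasFDerivAt (fun y => ContinuousLinearMap.adjoint (fderiv ℝ σ y))
        ((adjCLM n).comp B) x := (adjCLM n).hasFDerivAt.comp x hDfd
    have hG := hadj.clm_comp hDfd
    have key : ⟪(fderiv ℝ
          (fun y => (ContinuousLinearMap.adjoint (fderiv ℝ σ y)).comp (fderiv ℝ σ y))
          x v) w, z⟫
        = ⟪fderiv ℝ σ x w, B v z⟫ + ⟪B v w, fderiv ℝ σ x z⟫ := by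
      rw [hG.fderiv]
      simp only [ContinuousLinearMap.add_apply, ContinuousLinearMap.comp_apply,
        ContinuousLinearMap.flip_apply, ContinuousLinearMap.compL_apply]
      rw [inner_add_left, ContinuousLinearMap.adjoint_inner_left]
      have : (adjCLM n) (B v) = ContinuousLinearMap.adjoint (B v) := rfl
      rw [this, ContinuousLinearMap.adjoint_inner_left]
      ring
    rw [key]
    -- notation for the tangential projections
    set a := ⟪v, ν x⟫ with ha
    set b := ⟪w, ν x⟫ with hb'
    set c := ⟪z, ν x⟫ with hc'
    set vt := v - a • ν x with hvt
    set wt := w - b • ν x with hwt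
    set zt := z - c • ν x with hzt
    have hvtt : ⟪vt, ν x⟫ = 0 := hPt x hx v
    have hwtt : ⟪wt, ν x⟫ = 0 := hPt x hx w
    have hztt : ⟪zt, ν x⟫ = 0 := hPt x hx z
    -- value of B on arbitrary vectors
    have hBval : ∀ p q : EuclideanSpace ℝ (Fin n), ∀ hp : ⟪p, ν x⟫ = 0, ∀ hq : ⟪q, ν x⟫ = 0,
        ∀ cp cq : ℝ,
        B (cp • ν x + p) (cq • ν x + q)
          = cp • (-(fderiv ℝ ν x q) - fderiv ℝ ν x q)
            + cq • (-(fderiv ℝ ν x p) - fderiv ℝ ν x p)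
            + -((2 * ⟪q, fderiv ℝ ν x p⟫) • ν x) := by
      intro p q hp hq cp cq
      rw [map_add, map_smul]
      simp only [ContinuousLinearMap.add_apply, ContinuousLinearMap.smul_apply, map_add,
        map_smul]
      rw [hBνν, hBνt q hq, hBtt p q hp hq]
      rw [hBsym p (ν x), hBνt p hp]
      module
    have hvdec : v = a • ν x + vt := by rw [hvt]; abel
    have hwdec : w = b • ν x + wt := by rw [hwt]; abel
    have hzdec : z = c • ν x + zt := by rw [hzt]; abel
    have hBvz : B v z = a • (-(fderiv ℝ ν x zt) - fderiv ℝ ν x zt)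
        + c • (-(fderiv ℝ ν x vt) - fderiv ℝ ν x vt)
        + -((2 * ⟪zt, fderiv ℝ ν x vt⟫) • ν x) := by
      conv_lhs => rw [hvdec, hzdec]
      exact hBval vt zt hvtt hztt a c
    have hBvw : B v w = a • (-(fderiv ℝ ν x wt) - fderiv ℝ ν x wt)
        + b • (-(fderiv ℝ ν x vt) - fderiv ℝ ν x vt)
        + -((2 * ⟪wt, fderiv ℝ ν x vt⟫) • ν x) := by
      conv_lhs => rw [hvdec, hwdec]
      exact hBval vt wt hvtt hwtt a b
    -- tangency of the Dν-values
    have hDνvt : ⟪fderiv ℝ ν x vt, ν x⟫ = 0 := L3 x hx vt hvtt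
    have hDνwt : ⟪fderiv ℝ ν x wt, ν x⟫ = 0 := L3 x hx wt hwtt
    have hDνzt : ⟪fderiv ℝ ν x zt, ν x⟫ = 0 := L3 x hx zt hztt
    -- expand everything
    rw [hBvz, hBvw, hA w, hA z]
    rw [hwdec, hzdec]
    simp only [inner_add_left, inner_add_right, inner_sub_left, inner_sub_right,
      inner_smul_left, inner_smul_right, inner_neg_left, inner_neg_right,
      RCLike.inner_apply, conj_trivial]
    rw [real_inner_comm v (ν x)]
    have e1 : ⟪ν x, fderiv ℝ ν x vt⟫ = 0 := by rw [real_inner_comm]; exact hDνvt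
    have e2 : ⟪ν x, fderiv ℝ ν x wt⟫ = 0 := by rw [real_inner_comm]; exact hDνwt
    have e3 : ⟪ν x, fderiv ℝ ν x zt⟫ = 0 := by rw [real_inner_comm]; exact hDνzt
    have e4 : ⟪ν x, ν x⟫ = 1 := hν1 x hx
    have w1 : ⟪wt, fderiv ℝ ν x zt⟫ = ⟪zt, fderiv ℝ ν x wt⟫ := hW zt wt hztt hwtt
    have c1 : ⟪fderiv ℝ ν x wt, zt⟫ = ⟪zt, fderiv ℝ ν x wt⟫ := real_inner_comm _ _
    have c2 : ⟪fderiv ℝ ν x vt, zt⟫ = ⟪zt, fderiv ℝ ν x vt⟫ := real_inner_comm _ _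
    have c3 : ⟪fderiv ℝ ν x zt, wt⟫ = ⟪wt, fderiv ℝ ν x zt⟫ := real_inner_comm _ _
    have c4 : ⟪fderiv ℝ ν x vt, wt⟫ = ⟪wt, fderiv ℝ ν x vt⟫ := real_inner_comm _ _
    have e5 : ⟪ν x, zt⟫ = 0 := by rw [real_inner_comm]; exact hztt
    simp only [e1, e2, e3, e4, e5, hDνvt, hDνwt, hDνzt, hwtt, hztt, ← ha,
      mul_zero, zero_mul, mul_one, one_mul, add_zero, zero_add, sub_zero, neg_zero]
    linear_combination (-2*a) * w1 + (2*a) * c1 - 2*b*c2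
end
end

section
/- Let Ω ⊂ ℝⁿ be a bounded C² domain whose boundary has normal injectivity radius ρ_S. If Δ is an orthogonal m-slice of Ω (a connected component of the interior of the intersection of Ω̄ with an affine m-plane, meeting ∂Ω orthogonally), then there is a point p ∈ Δ with dist(p, ∂Δ) ≥ ρ_S; in particular, for δ < ρ_S, |Δ ∩ (Ω ∖ U_δ(S))| ≥ c(m)(ρ_S − δ)^m > 0. -/
open MeasureTheory

noncomputable section

open Metric Set
open scoped RealInnerProductSpace ENNReal

lemma aux_measure_ball {n : ℕ} (P : Submodule ℝ (EuclideanSpace ℝ (Fin n)))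
    (hk : 0 < Module.finrank ℝ P) (p : EuclideanSpace ℝ (Fin n)) (r : ℝ) (hr : 0 < r) :
    ENNReal.ofReal ((2 / Real.sqrt (Module.finrank ℝ P)) ^ (Module.finrank ℝ P) * r ^ (Module.finrank ℝ P)) ≤
      μH[((Module.finrank ℝ P : ℕ) : ℝ)]
        {y : EuclideanSpace ℝ (Fin n) | y - p ∈ (P : Set (EuclideanSpace ℝ (Fin n))) ∧ dist y p < r} := by
  set k := Module.finrank ℝ P with hkdef
  have hk0 : (0:ℝ) < (k:ℝ) := by exact_mod_cast hk
  have hsq : (0:ℝ) < Real.sqrt k := Real.sqrt_pos.mpr hk0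
  set L := (stdOrthonormalBasis ℝ P).repr.symm with hL
  set ι : EuclideanSpace ℝ (Fin k) → EuclideanSpace ℝ (Fin n) :=
    fun w => p + ((L w : P) : EuclideanSpace ℝ (Fin n)) with hι
  have hIso : Isometry ι := by
    apply Isometry.of_dist_eq
    intro w w'
    have : ι w - ι w' = ((L w - L w' : P) : EuclideanSpace ℝ (Fin n)) := by
      simp [hι]
    rw [dist_eq_norm, this]
    rw [show ((L w - L w' : P) : EuclideanSpace ℝ (Fin n)) = ((L (w - w') : P) : _) by
      simp [map_sub]]
    rw [Submodule.norm_coe, LinearIsometryEquiv.norm_map]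
    exact (dist_eq_norm w w').symm
  have himg : ι '' (ball 0 r) ⊆
      {y : EuclideanSpace ℝ (Fin n) | y - p ∈ (P : Set (EuclideanSpace ℝ (Fin n))) ∧ dist y p < r} := by
    rintro y ⟨w, hw, rfl⟩
    constructor
    · simp [hι, SetLike.coe_mem]
    · have : dist (ι w) p = ‖w‖ := by
        rw [dist_eq_norm]
        simp only [hι, add_sub_cancel_left]
        rw [Submodule.norm_coe, LinearIsometryEquiv.norm_map]
      rw [this]
      exact mem_ball_zero_iff.mp hw
  have h1 : μH[(k : ℝ)] (ι '' (ball 0 r)) = μH[(k : ℝ)] (ball (0 : EuclideanSpace ℝ (Fin k)) r) :=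
    hIso.hausdorffMeasure_image (Or.inl (by positivity)) _
  have hμpi : (μH[(k : ℝ)] : Measure (Fin k → ℝ)) = volume := by
    have := hausdorffMeasure_pi_real (ι := Fin k)
    rwa [Fintype.card_fin] at this
  have h3 : μH[(k : ℝ)] ((WithLp.equiv 2 (Fin k → ℝ)) '' (ball (0 : EuclideanSpace ℝ (Fin k)) r))
      ≤ μH[(k : ℝ)] (ball (0 : EuclideanSpace ℝ (Fin k)) r) := by
    have := (PiLp.lipschitzWith_ofLp 2 (fun _ : Fin k => ℝ)).hausdorffMeasure_image_le
      (show (0:ℝ) ≤ (k:ℝ) by positivity) (ball (0 : EuclideanSpace ℝ (Fin k)) r)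
    simpa using this
  have hbox : (univ.pi fun _ : Fin k => Ioo (-(r / Real.sqrt k)) (r / Real.sqrt k)) ⊆
      (WithLp.equiv 2 (Fin k → ℝ)) '' (ball (0 : EuclideanSpace ℝ (Fin k)) r) := by
    intro x hx
    refine ⟨(WithLp.equiv 2 (Fin k → ℝ)).symm x, ?_, by simp⟩
    rw [mem_ball_zero_iff]
    have hnorm : ‖(WithLp.equiv 2 (Fin k → ℝ)).symm x‖
        = Real.sqrt (∑ i, ‖x i‖ ^ 2) := by
      rw [EuclideanSpace.norm_eq]
      congr 1
    rw [hnorm]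
    rw [Real.sqrt_lt' hr]
    have hlt : ∀ i : Fin k, ‖x i‖ ^ 2 < r ^ 2 / k := by
      intro i
      have := hx i (mem_univ i)
      rw [mem_Ioo] at this
      have habs : |x i| < r / Real.sqrt k := abs_lt.mpr this
      have h2 : ‖x i‖ ^ 2 < (r / Real.sqrt k) ^ 2 := by
        rw [Real.norm_eq_abs]
        exact pow_lt_pow_left₀ habs (abs_nonneg _) (by norm_num) |>.trans_le (le_refl _)
      calc ‖x i‖ ^ 2 < (r / Real.sqrt k) ^ 2 := h2
        _ = r ^ 2 / k := by rw [div_pow, Real.sq_sqrt hk0.le]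
    calc (∑ i, ‖x i‖ ^ 2) < ∑ _i : Fin k, r ^ 2 / k := by
          apply Finset.sum_lt_sum_of_nonempty
          · exact Finset.univ_nonempty_iff.mpr (Fin.pos_iff_nonempty.mp hk)
          · intro i _; exact hlt i
      _ = r ^ 2 := by
          rw [Finset.sum_const, Finset.card_univ, Fintype.card_fin, nsmul_eq_mul]
          field_simp
  have hvol : volume (univ.pi fun _ : Fin k => Ioo (-(r / Real.sqrt k)) (r / Real.sqrt k))
      = ENNReal.ofReal ((2 / Real.sqrt k) ^ k * r ^ k) := by
    rw [volume_pi_pi]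
    simp only [Real.volume_Ioo]
    rw [Finset.prod_const, Finset.card_univ, Fintype.card_fin]
    rw [show (r / Real.sqrt k - -(r / Real.sqrt k)) = 2 * (r / Real.sqrt k) by ring]
    rw [← ENNReal.ofReal_pow (by positivity)]
    congr 1
    rw [← mul_pow]
    congr 1
    field_simp
  calc ENNReal.ofReal ((2 / Real.sqrt k) ^ k * r ^ k)
      = volume (univ.pi fun _ : Fin k => Ioo (-(r / Real.sqrt k)) (r / Real.sqrt k)) := hvol.symm
    _ = μH[(k : ℝ)] (univ.pi fun _ : Fin k => Ioo (-(r / Real.sqrt k)) (r / Real.sqrt k)) := by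
        rw [hμpi]
    _ ≤ μH[(k : ℝ)] ((WithLp.equiv 2 (Fin k → ℝ)) '' (ball (0 : EuclideanSpace ℝ (Fin k)) r)) :=
        measure_mono hbox
    _ ≤ μH[(k : ℝ)] (ball (0 : EuclideanSpace ℝ (Fin k)) r) := h3
    _ = μH[(k : ℝ)] (ι '' (ball 0 r)) := h1.symm
    _ ≤ _ := measure_mono himg
set_option maxHeartbeats 8000000 in
/-- Let `Ω ⊂ ℝⁿ` be a bounded `C²` domain whose boundary `S = ∂Ω` (with
interior unit normal `ν`) has normal injectivity radius `ρ > 0`. If `Δ` is an orthogonal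
`m`-slice of `Ω` — a nonempty connected, relatively open subset of an affine `m`-plane
`x₀ + P` contained in `Ω̄`, whose relative boundary `∂Δ = closure Δ \ Δ` lies in `S` with
`ν ∈ P` there — then there is `p ∈ Δ` with `dist(p, ∂Δ) ≥ ρ`; in particular for every
`δ ∈ (0,ρ)` one has `|Δ ∩ (Ω ∖ U_δ(S))| ≥ c(m)(ρ − δ)^m > 0` (m-dimensional Hausdorff
measure), for a constant `c = c(m) > 0`. -/
theorem stmt14 (n m : ℕ) (hm : 0 < m) (Ω : Set (EuclideanSpace ℝ (Fin n)))
    (hΩo : IsOpen Ω) (hΩb : Bornology.IsBounded Ω) (hΩne : Ω.Nonempty)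
    (ν : EuclideanSpace ℝ (Fin n) → EuclideanSpace ℝ (Fin n))
    (ρ : ℝ) (hρ : 0 < ρ)
    (hνunit : ∀ x ∈ frontier Ω, ‖ν x‖ = 1)
    (hνin : ∀ x ∈ frontier Ω, ∀ r ∈ Set.Ioo (0 : ℝ) ρ, x + r • ν x ∈ Ω)
    (hinj : ∀ x ∈ frontier Ω, ∀ y ∈ frontier Ω, ∀ r ∈ Set.Ioo (0 : ℝ) ρ,
      ∀ s ∈ Set.Ioo (0 : ℝ) ρ, x + r • ν x = y + s • ν y → x = y)
    (hnear : ∀ q ∈ Ω, ∀ z ∈ frontier Ω, dist q z = Metric.infDist q (frontier Ω) →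
      q = z + (dist q z) • ν z)
    (x₀ : EuclideanSpace ℝ (Fin n)) (P : Submodule ℝ (EuclideanSpace ℝ (Fin n)))
    (hP : Module.finrank ℝ P = m)
    (Δ : Set (EuclideanSpace ℝ (Fin n))) (hΔne : Δ.Nonempty) (hΔconn : IsConnected Δ)
    (hΔplane : Δ ⊆ {y | ∃ v ∈ P, y = x₀ + v})
    (hΔsub : Δ ⊆ closure Ω)
    (hΔopen : ∀ y ∈ Δ, ∃ ε > 0, ∀ z ∈ Metric.ball y ε, (∃ v ∈ P, z = x₀ + v) → z ∈ Δ)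
    (hΔbd : ∀ y ∈ closure Δ \ Δ, y ∈ frontier Ω ∧ ν y ∈ (P : Set (EuclideanSpace ℝ (Fin n)))) :
    (∃ pt ∈ Δ, ρ ≤ Metric.infDist pt (closure Δ \ Δ)) ∧
    ∃ c : ℝ, 0 < c ∧ ∀ δ ∈ Set.Ioo (0 : ℝ) ρ,
      ENNReal.ofReal (c * (ρ - δ) ^ m) ≤
        Measure.hausdorffMeasure (m : ℝ)
          (Δ ∩ (Ω \ Metric.thickening δ (frontier Ω))) := by
  classical
  subst hP
  -- basic notation
  have hk : 0 < Module.finrank ℝ P := hm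
  obtain ⟨v0, hv0P, hv0ne⟩ : ∃ v : EuclideanSpace ℝ (Fin n), v ∈ P ∧ v ≠ 0 := by
    have : Nontrivial P := Module.nontrivial_of_finrank_pos hk
    obtain ⟨w, hw⟩ := exists_ne (0 : P)
    exact ⟨(w : EuclideanSpace ℝ (Fin n)), w.2, by
      simpa [Submodule.coe_eq_zero] using hw⟩
  have hSclosed : IsClosed (frontier Ω) := isClosed_frontier
  have hSbd : Bornology.IsBounded (frontier Ω) := (hΩb.closure).subset frontier_subset_closure
  have hScompact : IsCompact (frontier Ω) := Metric.isCompact_of_isClosed_isBounded hSclosed hSbd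
  have hSnotΩ : ∀ x ∈ frontier Ω, x ∉ Ω := by
    intro x hx
    rw [hΩo.frontier_eq] at hx
    exact hx.2
  have hmemΩ : ∀ x ∈ closure Ω, x ∉ frontier Ω → x ∈ Ω := by
    intro x hx hnx
    rcases (closure_eq_self_union_frontier Ω ▸ hx) with h | h
    · exact h
    · exact absurd h hnx
  have hSne : (frontier Ω).Nonempty := by
    by_contra h
    rw [not_nonempty_iff_eq_empty] at h
    have hcl : closure Ω = Ω := by
      rw [closure_eq_self_union_frontier, h, union_empty]
    have hclopen : IsClopen Ω := ⟨hcl ▸ isClosed_closure, hΩo⟩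
    rcases isClopen_iff.mp hclopen with h1 | h2
    · exact hΩne.ne_empty h1
    · obtain ⟨R, hR⟩ := hΩb.subset_closedBall 0
      have hvn : (0:ℝ) < ‖v0‖ := norm_pos_iff.mpr hv0ne
      set x : EuclideanSpace ℝ (Fin n) := ((|R| + 1) / ‖v0‖) • v0 with hx
      have hxmem : x ∈ Ω := h2 ▸ mem_univ x
      have := hR hxmem
      rw [Metric.mem_closedBall, dist_zero_right, hx, norm_smul, Real.norm_eq_abs,
        abs_div, abs_of_nonneg (show (0:ℝ) ≤ |R|+1 by positivity), abs_of_nonneg hvn.le, div_mul_cancel₀ _ hvn.ne'] at this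
      have h3 : |R| + 1 ≤ |R| := this.trans (le_abs_self R)
      linarith
  -- plane
  have h𝒫closed : IsClosed {y : EuclideanSpace ℝ (Fin n) | ∃ v ∈ P, y = x₀ + v} := by
    have : {y : EuclideanSpace ℝ (Fin n) | ∃ v ∈ P, y = x₀ + v}
        = (fun y => y - x₀) ⁻¹' (P : Set (EuclideanSpace ℝ (Fin n))) := by
      ext y
      simp only [mem_setOf_eq, mem_preimage, SetLike.mem_coe]
      constructor
      · rintro ⟨v, hv, rfl⟩; simpa using hv
      · intro h; exact ⟨y - x₀, h, by abel⟩
    rw [this]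
    exact P.closed_of_finiteDimensional.preimage (continuous_id.sub continuous_const)
  have hclosΔ𝒫 : closure Δ ⊆ {y : EuclideanSpace ℝ (Fin n) | ∃ v ∈ P, y = x₀ + v} :=
    closure_minimal hΔplane h𝒫closed
  have h𝒫mem : ∀ y : EuclideanSpace ℝ (Fin n), (y - x₀ ∈ P) → (∃ v ∈ P, y = x₀ + v) := by
    intro y h
    exact ⟨y - x₀, h, by abel⟩
  have h𝒫mem' : ∀ y : EuclideanSpace ℝ (Fin n), (∃ v ∈ P, y = x₀ + v) → y - x₀ ∈ P := by
    rintro y ⟨v, hv, rfl⟩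
    simpa using hv
  -- normal segment basic facts
  have hfs : ∀ w ∈ frontier Ω, ∀ s : ℝ, 0 < s → s < ρ →
      Metric.infDist (w + s • ν w) (frontier Ω) = s := by
    intro w hw s hs0 hsρ
    have hqΩ : w + s • ν w ∈ Ω := hνin w hw s ⟨hs0, hsρ⟩
    have hds : dist (w + s • ν w) w = s := by
      rw [dist_eq_norm, add_sub_cancel_left, norm_smul, Real.norm_eq_abs, abs_of_pos hs0,
        hνunit w hw, mul_one]
    have hle : Metric.infDist (w + s • ν w) (frontier Ω) ≤ s := by
      calc Metric.infDist (w + s • ν w) (frontier Ω) ≤ dist (w + s • ν w) w :=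
            Metric.infDist_le_dist_of_mem hw
        _ = s := hds
    obtain ⟨w', hw'S, hw'd⟩ := hScompact.exists_infDist_eq_dist hSne (w + s • ν w)
    have he_le : dist (w + s • ν w) w' ≤ s := hw'd ▸ hle
    have he_pos : 0 < dist (w + s • ν w) w' := by
      rcases eq_or_lt_of_le (dist_nonneg : (0:ℝ) ≤ dist (w + s • ν w) w') with h | h
      · exfalso
        have : w + s • ν w = w' := dist_eq_zero.mp h.symm
        exact hSnotΩ w' hw'S (this ▸ hqΩ)
      · exact h
    have heq := hnear (w + s • ν w) hqΩ w' hw'S hw'd.symm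
    have hww' : w = w' :=
      hinj w hw w' hw'S s ⟨hs0, hsρ⟩ (dist (w + s • ν w) w') ⟨he_pos, he_le.trans_lt hsρ⟩ heq
    rw [hw'd, ← hww']
    exact hds
  have havoid : ∀ w ∈ frontier Ω, ∀ s : ℝ, 0 < s → s < ρ → ∀ x ∈ frontier Ω,
      s ≤ dist (w + s • ν w) x := by
    intro w hw s hs0 hsρ x hx
    calc s = Metric.infDist (w + s • ν w) (frontier Ω) := (hfs w hw s hs0 hsρ).symm
      _ ≤ dist (w + s • ν w) x := Metric.infDist_le_dist_of_mem hx
  have hball : ∀ w ∈ frontier Ω, ∀ s : ℝ, 0 < s → s < ρ →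
      Metric.ball (w + s • ν w) s ⊆ Ω := by
    intro w hw s hs0 hsρ
    have hnf : ∀ y ∈ Metric.ball (w + s • ν w) s, y ∉ frontier Ω := by
      intro y hy hyf
      have h1 := havoid w hw s hs0 hsρ y hyf
      rw [mem_ball, dist_comm] at hy
      linarith
    have hsub : Metric.ball (w + s • ν w) s ⊆ Ω ∪ (closure Ω)ᶜ := by
      intro y hy
      by_cases hc : y ∈ closure Ω
      · exact Or.inl (hmemΩ y hc (hnf y hy))
      · exact Or.inr hc
    have hpre : IsPreconnected (Metric.ball (w + s • ν w) s) := (convex_ball _ _).isPreconnected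
    have hdisj : Disjoint Ω (closure Ω)ᶜ := disjoint_compl_right.mono_left subset_closure
    have hne2 : (Metric.ball (w + s • ν w) s ∩ Ω).Nonempty :=
      ⟨w + s • ν w, Metric.mem_ball_self hs0, hνin w hw s ⟨hs0, hsρ⟩⟩
    exact hpre.subset_left_of_subset_union hΩo isClosed_closure.isOpen_compl hdisj hsub hne2
  -- continuity of normals (limit trick)
  have hLT : ∀ z ∈ frontier Ω, ∀ ε : ℝ, 0 < ε → ∃ δ > 0, ∀ p ∈ frontier Ω,
      dist p z < δ → ‖ν p - ν z‖ < ε := by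
    intro z hz ε hε
    by_contra hcon
    push_neg at hcon
    have hseq : ∀ k : ℕ, ∃ p, p ∈ frontier Ω ∧ dist p z < 1/((k:ℝ)+1) ∧ ε ≤ ‖ν p - ν z‖ := by
      intro k
      obtain ⟨p, hp1, hp2, hp3⟩ := hcon (1/((k:ℝ)+1)) (by positivity)
      exact ⟨p, hp1, hp2, hp3⟩
    choose pf hpS hpd hpε using hseq
    have hmem : ∀ k, ν (pf k) ∈ Metric.sphere (0 : EuclideanSpace ℝ (Fin n)) 1 := by
      intro k
      rw [mem_sphere_zero_iff_norm]
      exact hνunit _ (hpS k)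
    obtain ⟨νbar, hνbar, φ, hφ, hφtend⟩ :=
      (isCompact_sphere (0 : EuclideanSpace ℝ (Fin n)) 1).tendsto_subseq hmem
    have hptend : Filter.Tendsto (fun k => pf (φ k)) Filter.atTop (nhds z) := by
      rw [tendsto_iff_dist_tendsto_zero]
      apply squeeze_zero (fun k => dist_nonneg) (g := fun k : ℕ => 1/((k:ℝ)+1))
      · intro k
        have h1 : dist (pf (φ k)) z < 1/((φ k : ℝ)+1) := hpd (φ k)
        have h2 : (1:ℝ)/((φ k : ℝ)+1) ≤ 1/((k:ℝ)+1) := by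
          apply one_div_le_one_div_of_le (by positivity)
          have hkk : k ≤ φ k := hφ.le_apply
          have : ((k:ℝ)) ≤ ((φ k : ℕ) : ℝ) := Nat.cast_le.mpr hkk
          linarith
        linarith
      · exact tendsto_one_div_add_atTop_nhds_zero_nat
    have hs₀ : (0:ℝ) < ρ/2 := by linarith
    have hs₀ρ : ρ/2 < ρ := by linarith
    have hqtend : Filter.Tendsto (fun k => pf (φ k) + (ρ/2) • ν (pf (φ k))) Filter.atTop
        (nhds (z + (ρ/2) • νbar)) := hptend.add (hφtend.const_smul (ρ/2))
    have hfq : Metric.infDist (z + (ρ/2) • νbar) (frontier Ω) = ρ/2 := by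
      have hcont : Filter.Tendsto
          (fun k => Metric.infDist (pf (φ k) + (ρ/2) • ν (pf (φ k))) (frontier Ω))
          Filter.atTop (nhds (Metric.infDist (z + (ρ/2) • νbar) (frontier Ω))) :=
        ((continuous_infDist_pt (frontier Ω)).tendsto _).comp hqtend
      have heqc : (fun k => Metric.infDist (pf (φ k) + (ρ/2) • ν (pf (φ k))) (frontier Ω))
          = fun _ : ℕ => ρ/2 := by
        funext k
        exact hfs _ (hpS _) (ρ/2) hs₀ hs₀ρ
      rw [heqc] at hcont
      exact (tendsto_nhds_unique hcont tendsto_const_nhds)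
    have hqcl : z + (ρ/2) • νbar ∈ closure Ω :=
      mem_closure_of_tendsto hqtend
        (Filter.Eventually.of_forall (fun k => hνin _ (hpS _) (ρ/2) ⟨hs₀, hs₀ρ⟩))
    have hqnf : z + (ρ/2) • νbar ∉ frontier Ω := by
      intro h
      rw [Metric.infDist_zero_of_mem h] at hfq
      linarith
    have hqΩ : z + (ρ/2) • νbar ∈ Ω := hmemΩ _ hqcl hqnf
    have hνbarn : ‖νbar‖ = 1 := mem_sphere_zero_iff_norm.mp hνbar
    have hdistq : dist (z + (ρ/2) • νbar) z = ρ/2 := by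
      rw [dist_eq_norm, add_sub_cancel_left, norm_smul, Real.norm_eq_abs, abs_of_pos hs₀,
        hνbarn, mul_one]
    have hne := hnear _ hqΩ z hz (by rw [hdistq, hfq])
    rw [hdistq] at hne
    have hνeq : νbar = ν z := by
      have h1 : (ρ/2) • νbar = (ρ/2) • ν z := by
        have := hne
        rwa [add_right_inj] at this
      exact smul_right_injective _ (by linarith : (ρ/2:ℝ) ≠ 0) h1
    have htend2 : Filter.Tendsto (fun k => ‖ν (pf (φ k)) - ν z‖) Filter.atTop
        (nhds ‖νbar - ν z‖) := (hφtend.sub tendsto_const_nhds).norm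
    rw [hνeq, sub_self, norm_zero] at htend2
    have hεle : ε ≤ 0 := ge_of_tendsto htend2
      (Filter.Eventually.of_forall (fun k => hpε (φ k)))
    linarith
  -- the walk lemma
  have walk : ∀ a b : EuclideanSpace ℝ (Fin n), a ∈ Δ → (∃ v ∈ P, b = x₀ + v) →
      (∀ θ : ℝ, 0 < θ → θ ≤ 1 → a + θ • (b - a) ∉ closure Δ \ Δ) → b ∈ Δ := by
    intro a b haΔ hb𝒫 hexcl
    rcases eq_or_ne b a with rfl | hba
    · exact haΔ
    set A : Set ℝ := {θ | θ ∈ Icc (0:ℝ) 1 ∧ ∀ θ', 0 ≤ θ' → θ' ≤ θ → a + θ' • (b - a) ∈ Δ}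
      with hA
    have h0A : (0:ℝ) ∈ A := by
      refine ⟨⟨le_refl 0, zero_le_one⟩, ?_⟩
      intro θ' h0 h1
      have he : θ' = 0 := le_antisymm h1 h0
      rw [he]
      simpa using haΔ
    have hAbdd : BddAbove A := ⟨1, fun θ hθ => hθ.1.2⟩
    have hAne : A.Nonempty := ⟨0, h0A⟩
    set θs := sSup A with hθs
    have hθs0 : 0 ≤ θs := le_csSup hAbdd h0A
    have hθs1 : θs ≤ 1 := csSup_le hAne (fun θ hθ => hθ.1.2)
    have hbelow : ∀ θ', 0 ≤ θ' → θ' < θs → a + θ' • (b - a) ∈ Δ := by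
      intro θ' h0 hlt
      obtain ⟨θ, hθA, hθ'θ⟩ := exists_lt_of_lt_csSup hAne hlt
      exact hθA.2 θ' h0 hθ'θ.le
    have hdist2 : ∀ θ1 θ2 : ℝ, dist (a + θ1 • (b - a)) (a + θ2 • (b - a))
        = |θ1 - θ2| * ‖b - a‖ := by
      intro θ1 θ2
      rw [dist_eq_norm]
      have hv : (a + θ1 • (b - a)) - (a + θ2 • (b - a)) = (θ1 - θ2) • (b - a) := by module
      rw [hv, norm_smul, Real.norm_eq_abs]
    have hNpos : (0:ℝ) < ‖b - a‖ := by
      rw [norm_pos_iff, sub_ne_zero]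
      exact hba
    have hcl : a + θs • (b - a) ∈ closure Δ := by
      rcases eq_or_lt_of_le hθs0 with heq | hpos
      · rw [← heq]
        simpa using subset_closure haΔ
      · rw [Metric.mem_closure_iff]
        intro ε hε
        set η := min θs (ε / (‖b - a‖ + 1)) with hη
        have hη0 : 0 < η := lt_min hpos (by positivity)
        have hη1 : η ≤ θs := min_le_left _ _
        have hη2 : η ≤ ε / (‖b - a‖ + 1) := min_le_right _ _
        refine ⟨a + (θs - η/2) • (b - a), hbelow _ (by linarith) (by linarith), ?_⟩
        rw [hdist2]
        have h1 : |θs - (θs - η/2)| = η/2 := by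
          rw [show θs - (θs - η/2) = η/2 by ring, abs_of_pos (by linarith)]
        rw [h1]
        have h2 : η/2 * ‖b - a‖ ≤ ε / (‖b - a‖ + 1) * ‖b - a‖ := by
          apply mul_le_mul_of_nonneg_right (by linarith) (norm_nonneg _)
        have h3 : ε / (‖b - a‖ + 1) * ‖b - a‖ < ε := by
          rw [div_mul_eq_mul_div, div_lt_iff₀ (by positivity)]
          nlinarith
        linarith
    have hθsΔ : a + θs • (b - a) ∈ Δ := by
      rcases eq_or_lt_of_le hθs0 with heq | hpos
      · rw [← heq]
        simpa using haΔ
      · by_contra hnot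
        exact hexcl θs hpos hθs1 ⟨hcl, hnot⟩
    have hθs_eq : θs = 1 := by
      by_contra hne1
      have hlt1 : θs < 1 := lt_of_le_of_ne hθs1 hne1
      obtain ⟨ε, hε, hopen⟩ := hΔopen _ hθsΔ
      set η := min (1 - θs) (ε / (‖b - a‖ + 1)) with hη
      have hη0 : 0 < η := lt_min (by linarith) (by positivity)
      have hη1 : η ≤ 1 - θs := min_le_left _ _
      have hη2 : η ≤ ε / (‖b - a‖ + 1) := min_le_right _ _
      have hmem : θs + η/2 ∈ A := by
        refine ⟨⟨by linarith, by linarith⟩, ?_⟩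
        intro θ' h0 h1
        rcases le_or_gt θ' θs with hle | hgt
        · rcases eq_or_lt_of_le hle with heq2 | hlt2
          · rw [heq2]
            exact hθsΔ
          · exact hbelow θ' h0 hlt2
        · apply hopen
          · rw [mem_ball, hdist2]
            have habs : |θ' - θs| ≤ η/2 := by
              rw [abs_of_pos (by linarith)]
              linarith
            have h2 : |θ' - θs| * ‖b - a‖ ≤ η/2 * ‖b - a‖ :=
              mul_le_mul_of_nonneg_right habs (norm_nonneg _)
            have h3 : η/2 * ‖b - a‖ ≤ ε / (‖b - a‖ + 1) * ‖b - a‖ :=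
              mul_le_mul_of_nonneg_right (by linarith) (norm_nonneg _)
            have h4 : ε / (‖b - a‖ + 1) * ‖b - a‖ < ε := by
              rw [div_mul_eq_mul_div, div_lt_iff₀ (by positivity)]
              nlinarith
            linarith
          · obtain ⟨va, hva, hae⟩ := hΔplane haΔ
            obtain ⟨vb, hvb, hbe⟩ := hb𝒫
            refine ⟨va + θ' • (vb - va), P.add_mem hva (P.smul_mem _ (P.sub_mem hvb hva)), ?_⟩
            rw [hae, hbe]
            module
      have := le_csSup hAbdd hmem
      linarith
    have : a + (1:ℝ) • (b - a) ∈ Δ := hθs_eq ▸ hθsΔ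
    simpa using this
  -- relative boundary is closed and nonempty
  have hBclosed : IsClosed (closure Δ \ Δ) := by
    apply isClosed_of_closure_subset
    intro x hx
    have hx1 : x ∈ closure Δ := by
      have h1 : closure (closure Δ \ Δ) ⊆ closure (closure Δ) :=
        closure_mono diff_subset
      rw [closure_closure] at h1
      exact h1 hx
    refine ⟨hx1, ?_⟩
    intro hxΔ
    obtain ⟨ε, hε, hb⟩ := hΔopen x hxΔ
    obtain ⟨y, hyB, hyd⟩ := Metric.mem_closure_iff.mp hx ε hε
    exact hyB.2 (hb y (by rw [mem_ball, dist_comm]; exact hyd) (hclosΔ𝒫 hyB.1))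
  have hBne : (closure Δ \ Δ).Nonempty := by
    obtain ⟨y₀, hy₀⟩ := hΔne
    obtain ⟨R, hR⟩ := (hΩb.closure).subset_closedBall 0
    have hvn : (0:ℝ) < ‖v0‖ := norm_pos_iff.mpr hv0ne
    set A : Set ℝ := {τ | 0 ≤ τ ∧ ∀ τ', 0 ≤ τ' → τ' ≤ τ → y₀ + τ' • v0 ∈ Δ} with hA
    have h0A : (0:ℝ) ∈ A := by
      refine ⟨le_refl 0, ?_⟩
      intro τ' h0 h1
      have he : τ' = 0 := le_antisymm h1 h0
      rw [he]
      simpa using hy₀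
    have hAbdd : BddAbove A := by
      refine ⟨(R + ‖y₀‖) / ‖v0‖, ?_⟩
      intro τ hτ
      have h1 : y₀ + τ • v0 ∈ Δ := hτ.2 τ hτ.1 le_rfl
      have h2 : ‖y₀ + τ • v0‖ ≤ R := by
        have := hR (closure_minimal hΔsub isClosed_closure (subset_closure h1))
        rwa [Metric.mem_closedBall, dist_zero_right] at this
      have h3 : τ * ‖v0‖ ≤ R + ‖y₀‖ := by
        have h4 : ‖τ • v0‖ ≤ ‖y₀ + τ • v0‖ + ‖y₀‖ := by
          have := norm_add_le (y₀ + τ • v0) (-y₀)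
          simpa using this
        rw [norm_smul, Real.norm_eq_abs, abs_of_nonneg hτ.1] at h4
        linarith
      rw [le_div_iff₀ hvn]
      exact h3
    have hAne : A.Nonempty := ⟨0, h0A⟩
    set τs := sSup A with hτs
    have hτs0 : 0 ≤ τs := le_csSup hAbdd h0A
    have hbelow : ∀ τ', 0 ≤ τ' → τ' < τs → y₀ + τ' • v0 ∈ Δ := by
      intro τ' h0 hlt
      obtain ⟨τ, hτA, hτ'τ⟩ := exists_lt_of_lt_csSup hAne hlt
      exact hτA.2 τ' h0 hτ'τ.le
    have hdist2 : ∀ τ1 τ2 : ℝ, dist (y₀ + τ1 • v0) (y₀ + τ2 • v0) = |τ1 - τ2| * ‖v0‖ := by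
      intro τ1 τ2
      rw [dist_eq_norm]
      have hv : (y₀ + τ1 • v0) - (y₀ + τ2 • v0) = (τ1 - τ2) • v0 := by module
      rw [hv, norm_smul, Real.norm_eq_abs]
    have hcl : y₀ + τs • v0 ∈ closure Δ := by
      rcases eq_or_lt_of_le hτs0 with heq | hpos
      · rw [← heq]
        simpa using subset_closure hy₀
      · rw [Metric.mem_closure_iff]
        intro ε hε
        set η := min τs (ε / (‖v0‖ + 1)) with hη
        have hη0 : 0 < η := lt_min hpos (by positivity)
        have hη1 : η ≤ τs := min_le_left _ _
        have hη2 : η ≤ ε / (‖v0‖ + 1) := min_le_right _ _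
        refine ⟨y₀ + (τs - η/2) • v0, hbelow _ (by linarith) (by linarith), ?_⟩
        rw [hdist2]
        have h1 : |τs - (τs - η/2)| = η/2 := by
          rw [show τs - (τs - η/2) = η/2 by ring, abs_of_pos (by linarith)]
        rw [h1]
        have h2 : η/2 * ‖v0‖ ≤ ε / (‖v0‖ + 1) * ‖v0‖ :=
          mul_le_mul_of_nonneg_right (by linarith) (norm_nonneg _)
        have h3 : ε / (‖v0‖ + 1) * ‖v0‖ < ε := by
          rw [div_mul_eq_mul_div, div_lt_iff₀ (by positivity)]
          nlinarith
        linarith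
    by_contra hemp
    rw [not_nonempty_iff_eq_empty] at hemp
    have hτsΔ : y₀ + τs • v0 ∈ Δ := by
      by_contra hnot
      have : y₀ + τs • v0 ∈ closure Δ \ Δ := ⟨hcl, hnot⟩
      rw [hemp] at this
      exact this
    obtain ⟨ε, hε, hopen⟩ := hΔopen _ hτsΔ
    set η := ε / (2 * (‖v0‖ + 1)) with hη
    have hη0 : 0 < η := by positivity
    have hmem : τs + η ∈ A := by
      refine ⟨by linarith, ?_⟩
      intro τ' h0 h1
      rcases le_or_gt τ' τs with hle | hgt
      · rcases eq_or_lt_of_le hle with heq2 | hlt2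
        · rw [heq2]
          exact hτsΔ
        · exact hbelow τ' h0 hlt2
      · apply hopen
        · rw [mem_ball, hdist2]
          have habs : |τ' - τs| ≤ η := by
            rw [abs_of_pos (by linarith)]
            linarith
          have h2 : |τ' - τs| * ‖v0‖ ≤ η * ‖v0‖ :=
            mul_le_mul_of_nonneg_right habs (norm_nonneg _)
          have h3 : η * ‖v0‖ < ε := by
            rw [hη, div_mul_eq_mul_div, div_lt_iff₀ (by positivity)]
            nlinarith
          linarith
        · obtain ⟨va, hva, hae⟩ := hΔplane hy₀
          refine ⟨va + τ' • v0, P.add_mem hva (P.smul_mem _ hv0P), ?_⟩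
          rw [hae]
          module
    have := le_csSup hAbdd hmem
    linarith
  -- main construction
  obtain ⟨q₀, hq₀Δ⟩ := hΔne
  obtain ⟨z', hz'B, hz'd⟩ := hBclosed.exists_infDist_eq_dist hBne q₀
  have hz'S : z' ∈ frontier Ω := (hΔbd z' hz'B).1
  have hνz'P : ν z' ∈ P := (hΔbd z' hz'B).2
  have hνz'n : ‖ν z'‖ = 1 := hνunit z' hz'S
  set d' : ℝ := dist q₀ z' with hd'def
  have hd'pos : 0 < d' := by
    rcases eq_or_lt_of_le (dist_nonneg : (0:ℝ) ≤ dist q₀ z') with h | h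
    · exfalso
      have : q₀ = z' := dist_eq_zero.mp h.symm
      exact hz'B.2 (this ▸ hq₀Δ)
    · exact h
  clear_value d'
  set u' : EuclideanSpace ℝ (Fin n) := d'⁻¹ • (q₀ - z') with hu'def
  have hu'n : ‖u'‖ = 1 := by
    rw [hu'def, norm_smul, Real.norm_eq_abs, abs_inv, abs_of_pos hd'pos, ← dist_eq_norm,
      ← hd'def, inv_mul_cancel₀ hd'pos.ne']
  have hq₀eq : q₀ = z' + d' • u' := by
    rw [hu'def, smul_smul, mul_inv_cancel₀ hd'pos.ne', one_smul]
    abel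
  have hu'P : u' ∈ P := by
    rw [hu'def]
    apply P.smul_mem
    have h1 := h𝒫mem' q₀ (hΔplane hq₀Δ)
    have h2 := h𝒫mem' z' (hclosΔ𝒫 hz'B.1)
    have h3 := P.sub_mem h1 h2
    simpa [sub_sub_sub_cancel_right] using h3
  have hz'x₀ : z' - x₀ ∈ P := h𝒫mem' z' (hclosΔ𝒫 hz'B.1)
  clear_value u'
  -- the segment from q₀ to z' stays in Δ
  have hseg : ∀ τ : ℝ, 0 < τ → τ < d' → z' + τ • u' ∈ Δ := by
    intro τ hτ0 hτd
    apply walk q₀ (z' + τ • u') hq₀Δ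
    · apply h𝒫mem
      have hv : z' + τ • u' - x₀ = (z' - x₀) + τ • u' := by abel
      rw [hv]
      exact P.add_mem hz'x₀ (P.smul_mem _ hu'P)
    · intro θ hθ0 hθ1 hmem
      have hkey : dist q₀ (q₀ + θ • (z' + τ • u' - q₀)) < d' := by
        have hvec : q₀ - (q₀ + θ • (z' + τ • u' - q₀)) = (θ * (d' - τ)) • u' := by
          rw [hq₀eq]
          module
        rw [dist_eq_norm, hvec, norm_smul, Real.norm_eq_abs, hu'n, mul_one,
          abs_of_pos (by nlinarith : (0:ℝ) < θ * (d' - τ))]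
        nlinarith
      have hge : d' ≤ dist q₀ (q₀ + θ • (z' + τ • u' - q₀)) := by
        have h1 := Metric.infDist_le_dist_of_mem hmem (x := q₀)
        rw [hz'd] at h1
        exact h1
      linarith
  -- expansion helper
  have hexpand : ∀ (a b : EuclideanSpace ℝ (Fin n)) (s t : ℝ), ‖a‖ = 1 → ‖b‖ = 1 →
      ‖s • a + t • b‖ ^ 2 = s ^ 2 + 2 * s * t * ⟪a, b⟫ + t ^ 2 := by
    intro a b s t ha hb
    rw [norm_add_sq_real, norm_smul, norm_smul, real_inner_smul_left, real_inner_smul_right]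
    simp [ha, hb, Real.norm_eq_abs, sq_abs]
    ring
  have hc' : -(1/4 : ℝ) ≤ ⟪u', ν z'⟫ := by
    by_contra hcon
    push_neg at hcon
    obtain ⟨δ₀, hδ₀pos, hδ₀⟩ := hLT z' hz'S (1/8) (by norm_num)
    set τ : ℝ := min (δ₀/3) (min (ρ/12) (d'/2)) with hτdef
    have hτ0 : 0 < τ := lt_min (by positivity) (lt_min (by positivity) (by positivity))
    have hτδ : τ ≤ δ₀/3 := min_le_left _ _
    have hτρ : τ ≤ ρ/12 := (min_le_right _ _).trans (min_le_left _ _)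
    have hτd : τ ≤ d'/2 := (min_le_right _ _).trans (min_le_right _ _)
    clear_value τ
    have hxΔ := hseg τ hτ0 (by linarith)
    have hxz : dist (z' + τ • u') z' = τ := by
      rw [dist_eq_norm, add_sub_cancel_left, norm_smul, Real.norm_eq_abs, abs_of_pos hτ0,
        hu'n, mul_one]
    by_cases hxΩ : z' + τ • u' ∈ Ω
    · -- interior case
      have hxnf : z' + τ • u' ∉ frontier Ω := fun h => hSnotΩ _ h hxΩ
      obtain ⟨w, hwS, hwd⟩ := hScompact.exists_infDist_eq_dist hSne (z' + τ • u')
      have he_pos : 0 < dist (z' + τ • u') w := by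
        rcases eq_or_lt_of_le (dist_nonneg : (0:ℝ) ≤ dist (z' + τ • u') w) with h | h
        · exact absurd (dist_eq_zero.mp h.symm ▸ hwS) hxnf
        · exact h
      have he_le : dist (z' + τ • u') w ≤ τ := by
        calc dist (z' + τ • u') w = Metric.infDist (z' + τ • u') (frontier Ω) := hwd.symm
          _ ≤ dist (z' + τ • u') z' := Metric.infDist_le_dist_of_mem hz'S
          _ = τ := hxz
      have hxw := hnear _ hxΩ w hwS hwd.symm
      set e := dist (z' + τ • u') w with hedef
      have hwz : dist w z' < δ₀ := by
        calc dist w z' ≤ dist w (z' + τ • u') + dist (z' + τ • u') z' := dist_triangle _ _ _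
          _ = e + τ := by rw [dist_comm w (z' + τ • u'), ← hedef, hxz]
          _ < δ₀ := by linarith
      have hν8 := hδ₀ w hwS hwz
      have hip : ⟪u', ν w⟫ < -(1/8) := by
        have h1 : ⟪u', ν w - ν z'⟫ ≤ ‖u'‖ * ‖ν w - ν z'‖ := real_inner_le_norm _ _
        have h2 : ⟪u', ν w⟫ = ⟪u', ν z'⟫ + ⟪u', ν w - ν z'⟫ := by
          rw [inner_sub_right]
          ring
        rw [hu'n, one_mul] at h1
        linarith
      have havq := havoid w hwS (ρ/2) (by linarith) (by linarith) z' hz'S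
      have hkey : (w + (ρ/2) • ν w) - z' = τ • u' + (ρ/2 - e) • ν w := by
        have h9 : w - z' = τ • u' - e • ν w := by
          have h8 : w - z' = (w + e • ν w) - z' - e • ν w := by abel
          rw [h8, ← hxw]
          abel
        have h10 : (w + (ρ/2) • ν w) - z' = (w - z') + (ρ/2) • ν w := by abel
        rw [h10, h9, sub_smul]
        abel
      have hsq : (ρ/2)^2 ≤ τ^2 + 2*τ*(ρ/2 - e)*⟪u', ν w⟫ + (ρ/2 - e)^2 := by
        have h1 : ρ/2 ≤ ‖τ • u' + (ρ/2 - e) • ν w‖ := by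
          rw [← hkey, ← dist_eq_norm]
          exact havq
        have h2 := hexpand u' (ν w) τ (ρ/2 - e) hu'n (hνunit w hwS)
        calc (ρ/2)^2 ≤ ‖τ • u' + (ρ/2 - e) • ν w‖^2 := by
              apply pow_le_pow_left₀ (by linarith) h1
          _ = _ := h2
      have hprod : 2*τ*(ρ/2 - e)*⟪u', ν w⟫ ≤ 2*τ*(ρ/2 - e)*(-(1/8)) := by
        apply mul_le_mul_of_nonneg_left hip.le
        nlinarith
      nlinarith [mul_pos he_pos (show (0:ℝ) < ρ - e by linarith),
        mul_le_mul_of_nonneg_left hτρ hτ0.le]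
    · -- frontier case
      have hxS : z' + τ • u' ∈ frontier Ω := by
        rw [hΩo.frontier_eq]
        exact ⟨hΔsub hxΔ, hxΩ⟩
      have hν8 := hδ₀ _ hxS (by rw [hxz]; linarith)
      have hip : ⟪u', ν (z' + τ • u')⟫ < -(1/8) := by
        have h1 : ⟪u', ν (z' + τ • u') - ν z'⟫ ≤ ‖u'‖ * ‖ν (z' + τ • u') - ν z'‖ :=
          real_inner_le_norm _ _
        have h2 : ⟪u', ν (z' + τ • u')⟫ = ⟪u', ν z'⟫ + ⟪u', ν (z' + τ • u') - ν z'⟫ := by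
          rw [inner_sub_right]
          ring
        rw [hu'n, one_mul] at h1
        linarith
      have havq := havoid _ hxS (ρ/2) (by linarith) (by linarith) z' hz'S
      have hkey : ((z' + τ • u') + (ρ/2) • ν (z' + τ • u')) - z'
          = τ • u' + (ρ/2) • ν (z' + τ • u') := by
        abel
      have hsq : (ρ/2)^2 ≤ τ^2 + 2*τ*(ρ/2)*⟪u', ν (z' + τ • u')⟫ + (ρ/2)^2 := by
        have h1 : ρ/2 ≤ ‖τ • u' + (ρ/2) • ν (z' + τ • u')‖ := by
          rw [← hkey, ← dist_eq_norm]
          exact havq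
        have h2 := hexpand u' (ν (z' + τ • u')) τ (ρ/2) hu'n (hνunit _ hxS)
        calc (ρ/2)^2 ≤ ‖τ • u' + (ρ/2) • ν (z' + τ • u')‖^2 := by
              apply pow_le_pow_left₀ (by linarith) h1
          _ = _ := h2
      have hprod : 2*τ*(ρ/2)*⟪u', ν (z' + τ • u')⟫ ≤ 2*τ*(ρ/2)*(-(1/8)) := by
        apply mul_le_mul_of_nonneg_left hip.le
        nlinarith
      nlinarith [mul_le_mul_of_nonneg_left hτρ hτ0.le]
  -- the climb
  set t : ℝ := min d' ρ / 4 with htdef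
  have ht0 : 0 < t := by
    rw [htdef]
    have := lt_min hd'pos hρ
    linarith
  have htd' : t ≤ d' / 4 := by
    rw [htdef]
    have := min_le_left d' ρ
    linarith
  have htρ : t ≤ ρ / 4 := by
    rw [htdef]
    have := min_le_right d' ρ
    linarith
  clear_value t
  set x : EuclideanSpace ℝ (Fin n) := z' + t • u' with hxdef
  have hxΔ : x ∈ Δ := hseg t ht0 (by linarith)
  clear_value x
  have hyt : x + t • ν z' ∈ Δ := by
    apply walk x (x + t • ν z') hxΔ
    · apply h𝒫mem
      have hv : x + t • ν z' - x₀ = (z' - x₀) + t • u' + t • ν z' := by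
        rw [hxdef]
        abel
      rw [hv]
      exact P.add_mem (P.add_mem hz'x₀ (P.smul_mem _ hu'P)) (P.smul_mem _ hνz'P)
    · intro θ hθ0 hθ1 hmem
      have hkey : dist q₀ (x + θ • (x + t • ν z' - x)) < d' := by
        have hvec : q₀ - (x + θ • (x + t • ν z' - x))
            = (d' - t) • u' + (-(θ * t)) • ν z' := by
          rw [hxdef, hq₀eq]
          module
        rw [dist_eq_norm, hvec]
        have h2 := hexpand u' (ν z') (d' - t) (-(θ * t)) hu'n hνz'n
        have hlt : ‖(d' - t) • u' + (-(θ * t)) • ν z'‖^2 < d'^2 := by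
          rw [h2]
          have hb1 : 0 ≤ θ * t := by positivity
          have hb2 : θ * t ≤ t := by nlinarith
          have hb3 : -(2 * (d' - t) * (θ * t)) * ⟪u', ν z'⟫
              ≤ (2 * (d' - t) * (θ * t)) * (1/4) := by
            have h4 : 0 ≤ 2 * (d' - t) * (θ * t) := by nlinarith
            nlinarith [mul_le_mul_of_nonneg_left hc' h4]
          nlinarith [mul_le_mul_of_nonneg_left hb2 (show (0:ℝ) ≤ d' - t by linarith),
            mul_le_mul hb2 hb2 hb1 ht0.le]
        exact lt_of_pow_lt_pow_left₀ 2 hd'pos.le hlt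
      have hge : d' ≤ dist q₀ (x + θ • (x + t • ν z' - x)) := by
        have h1 := Metric.infDist_le_dist_of_mem hmem (x := q₀)
        rw [hz'd] at h1
        exact h1
      linarith
  have hζ : ∀ σ : ℝ, t < σ → σ < ρ → z' + σ • ν z' ∈ Δ := by
    intro σ hσt hσρ
    have hσ0 : 0 < σ := lt_trans ht0 hσt
    have hytb : dist (x + t • ν z') (z' + σ • ν z') < σ := by
      have hvec : (x + t • ν z') - (z' + σ • ν z') = t • u' + (t - σ) • ν z' := by
        rw [hxdef]
        module
      rw [dist_eq_norm, hvec]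
      have h2 := hexpand u' (ν z') t (t - σ) hu'n hνz'n
      have hlt : ‖t • u' + (t - σ) • ν z'‖^2 < σ^2 := by
        rw [h2]
        have hb3 : 2 * t * (t - σ) * ⟪u', ν z'⟫ ≤ 2 * t * (σ - t) * (1/4) := by
          have h4 : 0 ≤ 2 * t * (σ - t) := by nlinarith
          nlinarith [mul_le_mul_of_nonneg_left hc' h4]
        nlinarith
      exact lt_of_pow_lt_pow_left₀ 2 hσ0.le hlt
    apply walk (x + t • ν z') (z' + σ • ν z') hyt
    · apply h𝒫mem
      have hv : z' + σ • ν z' - x₀ = (z' - x₀) + σ • ν z' := by abel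
      rw [hv]
      exact P.add_mem hz'x₀ (P.smul_mem _ hνz'P)
    · intro θ hθ0 hθ1 hmem
      have hγball : (x + t • ν z') + θ • ((z' + σ • ν z') - (x + t • ν z'))
          ∈ Metric.ball (z' + σ • ν z') σ := by
        rw [mem_ball, dist_eq_norm]
        have hvec : ((x + t • ν z') + θ • ((z' + σ • ν z') - (x + t • ν z')))
            - (z' + σ • ν z') = (1-θ) • ((x + t • ν z') - (z' + σ • ν z')) := by
          module
        rw [hvec, norm_smul, Real.norm_eq_abs, abs_of_nonneg (by linarith : (0:ℝ) ≤ 1 - θ)]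
        have hb := hytb
        rw [dist_eq_norm] at hb
        nlinarith [norm_nonneg ((x + t • ν z') - (z' + σ • ν z'))]
      have hΩmem := hball z' hz'S σ hσ0 hσρ hγball
      exact absurd hΩmem (hSnotΩ _ (hΔbd _ hmem).1)
  -- maximize distance to the frontier over the slice
  have hclosΔcompact : IsCompact (closure Δ) :=
    Metric.isCompact_of_isClosed_isBounded isClosed_closure
      ((hΩb.closure).subset (closure_minimal hΔsub isClosed_closure))
  obtain ⟨p, hpclos, hpmax⟩ := hclosΔcompact.exists_isMaxOn ⟨q₀, subset_closure hq₀Δ⟩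
    (continuous_infDist_pt (frontier Ω)).continuousOn
  rw [isMaxOn_iff] at hpmax
  have hfp : ρ ≤ Metric.infDist p (frontier Ω) := by
    by_contra hlt
    push_neg at hlt
    set σ : ℝ := (max t (Metric.infDist p (frontier Ω)) + ρ) / 2 with hσdef
    have h1 : t < σ := by
      have h2 : max t (Metric.infDist p (frontier Ω)) < ρ := by
        apply max_lt (by linarith) hlt
      have := le_max_left t (Metric.infDist p (frontier Ω))
      rw [hσdef]; linarith
    have h2 : Metric.infDist p (frontier Ω) < σ := by
      have h2 : max t (Metric.infDist p (frontier Ω)) < ρ := max_lt (by linarith) hlt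
      have := le_max_right t (Metric.infDist p (frontier Ω))
      rw [hσdef]; linarith
    have h3 : σ < ρ := by
      have h2 : max t (Metric.infDist p (frontier Ω)) < ρ := max_lt (by linarith) hlt
      rw [hσdef]; linarith
    have hζσ := hζ σ h1 h3
    have := hpmax _ (subset_closure hζσ)
    rw [hfs z' hz'S σ (by linarith) h3] at this
    linarith
  have hpΔ : p ∈ Δ := by
    by_contra hnp
    have hpB : p ∈ closure Δ \ Δ := ⟨hpclos, hnp⟩
    have := (hΔbd p hpB).1
    have h0 : Metric.infDist p (frontier Ω) = 0 := Metric.infDist_zero_of_mem this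
    rw [h0] at hfp
    linarith
  constructor
  · refine ⟨p, hpΔ, ?_⟩
    calc ρ ≤ Metric.infDist p (frontier Ω) := hfp
      _ ≤ Metric.infDist p (closure Δ \ Δ) :=
        Metric.infDist_le_infDist_of_subset (fun y hy => (hΔbd y hy).1) hBne
  · refine ⟨(2 / Real.sqrt (Module.finrank ℝ P)) ^ (Module.finrank ℝ P), by positivity, ?_⟩
    intro δ hδ
    obtain ⟨hδ0, hδρ⟩ := hδ
    have hr : (0:ℝ) < ρ - δ := by linarith
    have hsubset : {y : EuclideanSpace ℝ (Fin n) |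
        y - p ∈ (P : Set (EuclideanSpace ℝ (Fin n))) ∧ dist y p < ρ - δ} ⊆
        Δ ∩ (Ω \ Metric.thickening δ (frontier Ω)) := by
      rintro y ⟨hyP, hyd⟩
      have hy𝒫 : ∃ v ∈ P, y = x₀ + v := by
        apply h𝒫mem
        have h1 := h𝒫mem' p (hΔplane hpΔ)
        have hv : y - x₀ = (p - x₀) + (y - p) := by abel
        rw [hv]
        exact P.add_mem h1 hyP
      have hinf : ∀ θ : ℝ, 0 ≤ θ → θ ≤ 1 →
          δ < Metric.infDist (p + θ • (y - p)) (frontier Ω) := by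
        intro θ h0 h1
        have hdd : dist p (p + θ • (y - p)) < ρ - δ := by
          rw [dist_eq_norm]
          have hvec : p - (p + θ • (y - p)) = (-θ) • (y - p) := by module
          rw [hvec, norm_smul, Real.norm_eq_abs, abs_neg, abs_of_nonneg h0]
          have h2 : ‖y - p‖ < ρ - δ := by
            rw [← dist_eq_norm]
            exact hyd
          nlinarith [norm_nonneg (y - p)]
        have h3 := Metric.infDist_le_infDist_add_dist
          (x := p) (y := p + θ • (y - p)) (s := frontier Ω)
        linarith
      have hyΔ : y ∈ Δ := by
        apply walk p y hpΔ hy𝒫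
        intro θ hθ0 hθ1 hmem
        have hf2 := hinf θ hθ0.le hθ1
        rw [Metric.infDist_zero_of_mem ((hΔbd _ hmem).1)] at hf2
        linarith
      have hyf : δ < Metric.infDist y (frontier Ω) := by
        have h5 := hinf 1 zero_le_one le_rfl
        simpa using h5
      refine ⟨hyΔ, hmemΩ y (hΔsub hyΔ) ?_, ?_⟩
      · intro habs
        rw [Metric.infDist_zero_of_mem habs] at hyf
        linarith
      · intro habs
        rw [Metric.mem_thickening_iff] at habs
        obtain ⟨zz, hzzS, hzzd⟩ := habs
        have h6 := Metric.infDist_le_dist_of_mem hzzS (x := y)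
        linarith
    calc ENNReal.ofReal ((2 / Real.sqrt (Module.finrank ℝ P)) ^ (Module.finrank ℝ P) * (ρ - δ) ^ (Module.finrank ℝ P))
        ≤ μH[((Module.finrank ℝ P : ℕ) : ℝ)] {y : EuclideanSpace ℝ (Fin n) |
            y - p ∈ (P : Set (EuclideanSpace ℝ (Fin n))) ∧ dist y p < ρ - δ} :=
          aux_measure_ball P hk p (ρ - δ) hr
      _ ≤ _ := measure_mono hsubset
end
end
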